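/- Every tree T on n ≥ 3 vertices has a maximum matching M such that every vertex of maximum degree Δ(T) is covered by M. -/

import Mathlib

open SimpleGraph

/-- A walk is properly colored: no two consecutive edges share a color. -/
def ProperWalk {V : Type*} {G : SimpleGraph V} (c : Sym2 V → ℕ) {u v : V} (p : G.Walk u v) : Prop :=
  (p.edges.map c).Chain' (· ≠ ·)

/-- An edge-colored graph is properly connected. -/
def ProperlyConnected {V : Type*} (G : SimpleGraph V) (c : Sym2 V → ℕ) : Prop :=
  ∀ u v : V, u ≠ v → ∃ p : G.Walk u v, p.IsPath ∧ ProperWalk c p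

/-- Number of edges recolored away from the base color 0. -/
noncomputable def numRecolored {V : Type*} (G : SimpleGraph V) (c : Sym2 V → ℕ) : ℕ :=
  {e | e ∈ G.edgeSet ∧ c e ≠ 0}.ncard

/-- Number of new colors used. -/
noncomputable def numNewColors {V : Type*} (G : SimpleGraph V) (c : Sym2 V → ℕ) : ℕ :=
  (c '' {e | e ∈ G.edgeSet ∧ c e ≠ 0}).ncard

/-- Optimal proper connection number: minimum of p + q. -/
noncomputable def pcOpt {V : Type*} (G : SimpleGraph V) : ℕ :=
  sInf { n | ∃ c : Sym2 V → ℕ, ProperlyConnected G c ∧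
    n = numRecolored G c + numNewColors G c }

/-- Maximum matching size. -/
noncomputable def matchingNum {V : Type*} (G : SimpleGraph V) : ℕ :=
  sSup { n | ∃ M : SimpleGraph.Subgraph G, M.IsMatching ∧ n = M.edgeSet.ncard }

/-- Maximum degree. -/
noncomputable def maxDeg {V : Type*} (G : SimpleGraph V) : ℕ :=
  sSup { d | ∃ v : V, d = (G.neighborSet v).ncard }

section Aux

variable {V : Type*} [Fintype V] {T : SimpleGraph V}

lemma bddAbove_matchSet :
    BddAbove { n | ∃ M : SimpleGraph.Subgraph T, M.IsMatching ∧ n = M.edgeSet.ncard } := by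
  refine ⟨Fintype.card (Sym2 V), ?_⟩
  rintro n ⟨M, -, rfl⟩
  calc M.edgeSet.ncard ≤ (Set.univ : Set (Sym2 V)).ncard :=
        Set.ncard_le_ncard (Set.subset_univ _) (Set.toFinite _)
    _ = Fintype.card (Sym2 V) := by rw [Set.ncard_univ, Nat.card_eq_fintype_card]

lemma le_matchingNum (M : SimpleGraph.Subgraph T) (hM : M.IsMatching) :
    M.edgeSet.ncard ≤ matchingNum T :=
  le_csSup bddAbove_matchSet ⟨M, hM, rfl⟩

/-- If two adjacent vertices are both exposed, the matching is not maximum. -/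
lemma augment (M : SimpleGraph.Subgraph T) (hM : M.IsMatching)
    (hmax : M.edgeSet.ncard = matchingNum T) {x u : V} (hxu : T.Adj x u)
    (hx : x ∉ M.verts) (hu : u ∉ M.verts) : False := by
  set M₂ : SimpleGraph.Subgraph T :=
    { verts := insert x (insert u M.verts)
      Adj := fun a b => M.Adj a b ∨ (a = x ∧ b = u) ∨ (a = u ∧ b = x)
      adj_sub := by
        rintro a b (h | ⟨rfl, rfl⟩ | ⟨rfl, rfl⟩)
        · exact M.adj_sub h
        · exact hxu
        · exact hxu.symm
      edge_vert := by
        rintro a b (h | ⟨rfl, rfl⟩ | ⟨rfl, rfl⟩)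
        · exact Set.mem_insert_iff.2 (Or.inr (Set.mem_insert_iff.2 (Or.inr h.fst_mem)))
        · exact Set.mem_insert _ _
        · exact Set.mem_insert_iff.2 (Or.inr (Set.mem_insert _ _))
      symm := by
        constructor
        rintro a b (h | ⟨rfl, rfl⟩ | ⟨rfl, rfl⟩)
        · exact Or.inl h.symm
        · exact Or.inr (Or.inr ⟨rfl, rfl⟩)
        · exact Or.inr (Or.inl ⟨rfl, rfl⟩) } with hM₂def
  have hMadj_x : ∀ b, ¬ M.Adj x b := fun b h => hx h.fst_mem
  have hMadj_u : ∀ b, ¬ M.Adj u b := fun b h => hu h.fst_mem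
  have hxune : x ≠ u := hxu.ne
  have hmatch : M₂.IsMatching := by
    intro a ha
    simp only [hM₂def, Set.mem_insert_iff] at ha
    rcases ha with rfl | rfl | ha
    · refine ⟨u, Or.inr (Or.inl ⟨rfl, rfl⟩), ?_⟩
      rintro b (h | ⟨-, rfl⟩ | ⟨h, -⟩)
      · exact absurd h (hMadj_x b)
      · rfl
      · exact absurd h hxune
    · refine ⟨x, Or.inr (Or.inr ⟨rfl, rfl⟩), ?_⟩
      rintro b (h | ⟨h, -⟩ | ⟨-, rfl⟩)
      · exact absurd h (hMadj_u b)
      · exact absurd h.symm hxune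
      · rfl
    · obtain ⟨b, hb, hb'⟩ := hM ha
      refine ⟨b, Or.inl hb, ?_⟩
      rintro c (h | ⟨rfl, -⟩ | ⟨rfl, -⟩)
      · exact hb' c h
      · exact absurd ha hx
      · exact absurd ha hu
  have hedge : M₂.edgeSet = insert s(x, u) M.edgeSet := by
    ext e
    refine Sym2.ind (fun a b => ?_) e
    simp only [SimpleGraph.Subgraph.mem_edgeSet, Set.mem_insert_iff, hM₂def]
    constructor
    · rintro (h | ⟨rfl, rfl⟩ | ⟨rfl, rfl⟩)
      · exact Or.inr h
      · exact Or.inl rfl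
      · exact Or.inl (Sym2.eq_swap)
    · rintro (h | h)
      · rw [Sym2.eq_iff] at h
        rcases h with ⟨rfl, rfl⟩ | ⟨rfl, rfl⟩
        · exact Or.inr (Or.inl ⟨rfl, rfl⟩)
        · exact Or.inr (Or.inr ⟨rfl, rfl⟩)
      · exact Or.inl h
  have hnotmem : s(x, u) ∉ M.edgeSet := fun h => hx (SimpleGraph.Subgraph.mem_verts_of_mem_edge h (by simp))
  have hcard : M₂.edgeSet.ncard = M.edgeSet.ncard + 1 := by
    rw [hedge, Set.ncard_insert_of_notMem hnotmem (Set.toFinite _)]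
  have := le_matchingNum M₂ hmatch
  omega

/-- Swap an edge of the matching: remove `{u,w}`, add `{x,u}`. -/
lemma swap_matching (M : SimpleGraph.Subgraph T) (hM : M.IsMatching)
    {x u w : V} (hxu : T.Adj x u) (hx : x ∉ M.verts) (huw : M.Adj u w) :
    ∃ M' : SimpleGraph.Subgraph T, M'.IsMatching ∧
      M'.verts = insert x (M.verts \ {w}) ∧ M'.edgeSet.ncard = M.edgeSet.ncard := by
  have hu_mem : u ∈ M.verts := huw.fst_mem
  have hw_mem : w ∈ M.verts := huw.snd_mem
  have huwne : u ≠ w := huw.ne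
  have hxune : x ≠ u := hxu.ne
  have hxwne : x ≠ w := fun h => hx (h ▸ hw_mem)
  have hMadj_x : ∀ b, ¬ M.Adj x b := fun b h => hx h.fst_mem
  have hu_uniq : ∀ b, M.Adj u b → b = w := by
    intro b hb
    obtain ⟨c, hc, hc'⟩ := hM hu_mem
    rw [hc' b hb, hc' w huw]
  have hw_uniq : ∀ a, M.Adj a w → a = u := by
    intro a ha
    obtain ⟨c, hc, hc'⟩ := hM hw_mem
    have := hc' a ha.symm
    rw [this, hc' u huw.symm]
  set M' : SimpleGraph.Subgraph T :=
    { verts := insert x (M.verts \ {w})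
      Adj := fun a b => (M.Adj a b ∧ a ≠ w ∧ b ≠ w) ∨ (a = x ∧ b = u) ∨ (a = u ∧ b = x)
      adj_sub := by
        rintro a b (⟨h, -, -⟩ | ⟨rfl, rfl⟩ | ⟨rfl, rfl⟩)
        · exact M.adj_sub h
        · exact hxu
        · exact hxu.symm
      edge_vert := by
        rintro a b (⟨h, ha, -⟩ | ⟨rfl, rfl⟩ | ⟨rfl, rfl⟩)
        · exact Set.mem_insert_iff.2 (Or.inr ⟨h.fst_mem, ha⟩)
        · exact Set.mem_insert _ _
        · exact Set.mem_insert_iff.2 (Or.inr ⟨hu_mem, huwne⟩)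
      symm := by
        constructor
        rintro a b (⟨h, ha, hb⟩ | ⟨rfl, rfl⟩ | ⟨rfl, rfl⟩)
        · exact Or.inl ⟨h.symm, hb, ha⟩
        · exact Or.inr (Or.inr ⟨rfl, rfl⟩)
        · exact Or.inr (Or.inl ⟨rfl, rfl⟩) } with hM'def
  refine ⟨M', ?_, rfl, ?_⟩
  · intro a ha
    simp only [hM'def, Set.mem_insert_iff, Set.mem_diff, Set.mem_singleton_iff] at ha
    rcases ha with rfl | ⟨haM, haw⟩
    · refine ⟨u, Or.inr (Or.inl ⟨rfl, rfl⟩), ?_⟩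
      rintro b (⟨h, -, -⟩ | ⟨-, rfl⟩ | ⟨h, -⟩)
      · exact absurd h (hMadj_x b)
      · rfl
      · exact absurd h hxune
    · by_cases hau : a = u
      · subst hau
        refine ⟨x, Or.inr (Or.inr ⟨rfl, rfl⟩), ?_⟩
        rintro b (⟨h, -, hb⟩ | ⟨h, -⟩ | ⟨-, rfl⟩)
        · exact absurd (hu_uniq b h) hb
        · exact absurd h.symm hxune
        · rfl
      · obtain ⟨b, hb, hb'⟩ := hM haM
        have hbw : b ≠ w := fun h => hau (hw_uniq a (h ▸ hb))
        refine ⟨b, Or.inl ⟨hb, haw, hbw⟩, ?_⟩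
        rintro c (⟨h, -, -⟩ | ⟨rfl, -⟩ | ⟨rfl, -⟩)
        · exact hb' c h
        · exact absurd haM hx
        · exact absurd rfl hau
  · have hedge : M'.edgeSet = insert s(x, u) (M.edgeSet \ {s(u, w)}) := by
      ext e
      refine Sym2.ind (fun a b => ?_) e
      simp only [SimpleGraph.Subgraph.mem_edgeSet, Set.mem_insert_iff, Set.mem_diff,
        Set.mem_singleton_iff, hM'def]
      constructor
      · rintro (⟨h, ha, hb⟩ | ⟨rfl, rfl⟩ | ⟨rfl, rfl⟩)
        · refine Or.inr ⟨h, ?_⟩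
          rw [Sym2.eq_iff]
          rintro (⟨rfl, rfl⟩ | ⟨rfl, rfl⟩)
          · exact hb rfl
          · exact ha rfl
        · exact Or.inl rfl
        · exact Or.inl Sym2.eq_swap
      · rintro (h | ⟨h, hne⟩)
        · rw [Sym2.eq_iff] at h
          rcases h with ⟨rfl, rfl⟩ | ⟨rfl, rfl⟩
          · exact Or.inr (Or.inl ⟨rfl, rfl⟩)
          · exact Or.inr (Or.inr ⟨rfl, rfl⟩)
        · refine Or.inl ⟨h, ?_, ?_⟩
          · rintro rfl
            exact hne (by rw [Sym2.eq_iff]; exact Or.inr ⟨rfl, hw_uniq b h.symm⟩)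
          · rintro rfl
            exact hne (by rw [Sym2.eq_iff]; exact Or.inl ⟨hw_uniq a h, rfl⟩)
    rw [hedge]
    have h1 : s(x, u) ∉ M.edgeSet \ {s(u, w)} := by
      rintro ⟨h, -⟩
      exact hx (SimpleGraph.Subgraph.mem_verts_of_mem_edge h (by simp))
    have h2 : s(u, w) ∈ M.edgeSet := SimpleGraph.Subgraph.mem_edgeSet.2 huw
    rw [Set.ncard_insert_of_notMem h1 (Set.toFinite _),
      Set.ncard_diff_singleton_add_one h2 (Set.toFinite _)]

/-- Concatenating a fresh vertex to a path yields a path. -/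
lemma IsPath.concat' {a b c : V} {q : T.Walk a b} (hq : q.IsPath) (h : T.Adj b c)
    (hc : c ∉ q.support) : (q.concat h).IsPath := by
  rw [← SimpleGraph.Walk.isPath_reverse_iff, SimpleGraph.Walk.reverse_concat]
  exact hq.reverse.cons (by simpa [SimpleGraph.Walk.support_reverse] using hc)

/-- In a tree, a neighbor of the endpoint of a path which is not the penultimate
vertex does not lie on the path. -/
lemma not_mem_support_of_ne_penultimate (hT : T.IsTree) {v0 x u : V}
    (q : T.Walk v0 x) (hq : q.IsPath) (hadj : T.Adj x u)
    (hne : u ≠ q.reverse.getVert 1) : u ∉ q.support := by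
  classical
  intro hu
  have hux : u ≠ x := hadj.ne'
  have hxr : x ∉ (q.takeUntil u hu).support := by
    intro hxmem
    have hspec := q.take_spec hu
    have hnd := hq.support_nodup
    rw [← hspec, SimpleGraph.Walk.support_append, List.nodup_append] at hnd
    refine hnd.2.2 x hxmem x ?_ rfl
    have hx2 : x ∈ (q.dropUntil u hu).support := SimpleGraph.Walk.end_mem_support _
    rw [SimpleGraph.Walk.support_eq_cons, List.mem_cons] at hx2
    rcases hx2 with hx2 | hx2
    · exact absurd hx2.symm hux
    · exact hx2
  have hq' : ((q.takeUntil u hu).concat hadj.symm).IsPath :=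
    IsPath.concat' (hq.takeUntil hu) hadj.symm hxr
  have huniq : (q.takeUntil u hu).concat hadj.symm = q :=
    (hT.existsUnique_path v0 x).unique hq' hq
  apply hne
  rw [← huniq, SimpleGraph.Walk.reverse_concat]
  simp [SimpleGraph.Walk.getVert_cons_succ, SimpleGraph.Walk.getVert_zero]

lemma ncard_neighborSet_eq_degree [DecidableRel T.Adj] (v : V) :
    (T.neighborSet v).ncard = T.degree v := by
  rw [← SimpleGraph.card_neighborSet_eq_degree, Set.ncard_eq_toFinset_card']
  simp [Set.toFinset_card]

lemma two_le_maxDeg (hT : T.IsTree) (hn : 3 ≤ Fintype.card V) : 2 ≤ maxDeg T := by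
  classical
  have hcard : T.edgeFinset.card + 1 = Fintype.card V := hT.card_edgeFinset
  have hsum : ∑ v, T.degree v = 2 * T.edgeFinset.card :=
    SimpleGraph.sum_degrees_eq_twice_card_edges T
  have : ∃ v : V, 2 ≤ T.degree v := by
    by_contra h
    push_neg at h
    have hle : ∑ v, T.degree v ≤ ∑ _v : V, 1 :=
      Finset.sum_le_sum (fun v _ => Nat.lt_succ_iff.mp (h v))
    simp only [Finset.sum_const, smul_eq_mul, mul_one, Finset.card_univ] at hle
    omega
  obtain ⟨v, hv⟩ := this
  calc (2 : ℕ) ≤ T.degree v := hv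
    _ = (T.neighborSet v).ncard := (ncard_neighborSet_eq_degree v).symm
    _ ≤ maxDeg T := le_csSup ⟨Fintype.card V, by
        rintro d ⟨w, rfl⟩
        calc (T.neighborSet w).ncard ≤ (Set.univ : Set V).ncard :=
              Set.ncard_le_ncard (Set.subset_univ _) (Set.toFinite _)
          _ = Fintype.card V := by rw [Set.ncard_univ, Nat.card_eq_fintype_card]⟩
      ⟨v, rfl⟩

/-- The cascading swap argument. -/
lemma cascade (hT : T.IsTree) (hn : 3 ≤ Fintype.card V) (v0 : V) :
    ∀ (n : ℕ) (M : SimpleGraph.Subgraph T), M.IsMatching →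
      M.edgeSet.ncard = matchingNum T →
      ∀ x : V, x ∉ M.verts → (T.neighborSet x).ncard = maxDeg T →
      ∀ q : T.Walk v0 x, q.IsPath → Fintype.card V - q.length ≤ n →
      ∃ M' : SimpleGraph.Subgraph T, M'.IsMatching ∧
        M'.edgeSet.ncard = matchingNum T ∧
        insert x ({v : V | (T.neighborSet v).ncard = maxDeg T} ∩ M.verts) ⊆ M'.verts := by
  intro n
  induction n with
  | zero =>
    intro M hM hmax x hx hxS q hq hmeas
    exact absurd hq.length_lt (by omega)
  | succ n ih =>
    intro M hM hmax x hx hxS q hq hmeas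
    -- choose a neighbor u of x avoiding the penultimate vertex of q
    have hdeg : 2 ≤ (T.neighborSet x).ncard := hxS ▸ two_le_maxDeg hT hn
    have hex : ∃ u ∈ T.neighborSet x, u ≠ q.reverse.getVert 1 := by
      by_contra h
      push_neg at h
      have hsub : T.neighborSet x ⊆ {q.reverse.getVert 1} := fun a ha => h a ha
      have := Set.ncard_le_ncard hsub (Set.toFinite _)
      simp only [Set.ncard_singleton] at this
      omega
    obtain ⟨u, hu_nb, hu_pen⟩ := hex
    have hxu : T.Adj x u := hu_nb
    have hu_supp : u ∉ q.support := not_mem_support_of_ne_penultimate hT q hq hxu hu_pen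
    -- u must be covered
    have hu_mem : u ∈ M.verts := by
      by_contra hu
      exact augment M hM hmax hxu hx hu
    obtain ⟨w, hw, -⟩ := hM hu_mem
    have hw_mem : w ∈ M.verts := hw.snd_mem
    have hwx : w ≠ x := fun h => hx (h ▸ hw_mem)
    -- extend the path
    have hq1 : (q.concat hxu).IsPath := IsPath.concat' hq hxu hu_supp
    have hpen1 : (q.concat hxu).reverse.getVert 1 = x := by
      rw [SimpleGraph.Walk.reverse_concat]
      simp [SimpleGraph.Walk.getVert_cons_succ, SimpleGraph.Walk.getVert_zero]
    have huw_adj : T.Adj u w := M.adj_sub hw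
    have hw_supp : w ∉ (q.concat hxu).support :=
      not_mem_support_of_ne_penultimate hT _ hq1 huw_adj (by rw [hpen1]; exact hwx)
    have hq2 : ((q.concat hxu).concat huw_adj).IsPath := IsPath.concat' hq1 huw_adj hw_supp
    -- swap
    obtain ⟨M₁, hM₁, hverts₁, hcard₁⟩ := swap_matching M hM hxu hx hw
    have hmax₁ : M₁.edgeSet.ncard = matchingNum T := hcard₁.trans hmax
    have hw_not₁ : w ∉ M₁.verts := by
      rw [hverts₁]
      rintro (h | ⟨-, h⟩)
      · exact hwx h
      · exact h rfl
    by_cases hwS : (T.neighborSet w).ncard = maxDeg T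
    · -- recurse
      have hlen2 : ((q.concat hxu).concat huw_adj).length = q.length + 2 := by
        rw [SimpleGraph.Walk.length_concat, SimpleGraph.Walk.length_concat]
      have hmeas2 : Fintype.card V - ((q.concat hxu).concat huw_adj).length ≤ n := by
        have := hq2.length_lt
        omega
      obtain ⟨M', hM', hmax', hsub'⟩ :=
        ih M₁ hM₁ hmax₁ w hw_not₁ hwS ((q.concat hxu).concat huw_adj) hq2 hmeas2
      refine ⟨M', hM', hmax', ?_⟩
      rintro a (rfl | ⟨haS, haM⟩)
      · exact hsub' (Or.inr ⟨hxS, hverts₁ ▸ Set.mem_insert _ _⟩)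
      · by_cases haw : a = w
        · exact hsub' (Or.inl haw)
        · exact hsub' (Or.inr ⟨haS, hverts₁ ▸ Set.mem_insert_iff.2 (Or.inr ⟨haM, haw⟩)⟩)
    · -- done
      refine ⟨M₁, hM₁, hmax₁, ?_⟩
      rintro a (rfl | ⟨haS, haM⟩)
      · exact hverts₁ ▸ Set.mem_insert _ _
      · have haw : a ≠ w := fun h => hwS (h ▸ haS)
        exact hverts₁ ▸ Set.mem_insert_iff.2 (Or.inr ⟨haM, haw⟩)

end Aux

theorem stmt13 {V : Type*} [Fintype V] (T : SimpleGraph V) (hT : T.IsTree)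
    (hn : 3 ≤ Fintype.card V) :
    ∃ M : SimpleGraph.Subgraph T, M.IsMatching ∧ M.edgeSet.ncard = matchingNum T ∧
      ∀ v : V, (T.neighborSet v).ncard = maxDeg T → v ∈ M.verts := by
  classical
  set S : Set V := {v : V | (T.neighborSet v).ncard = maxDeg T} with hSdef
  -- a maximum matching exists
  have hBne : (0 : ℕ) ∈ { n | ∃ M : SimpleGraph.Subgraph T, M.IsMatching ∧ n = M.edgeSet.ncard } := by
    refine ⟨⊥, ?_, ?_⟩
    · intro v hv
      simp at hv
    · simp [SimpleGraph.Subgraph.edgeSet_bot]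
  have hmax_mem : matchingNum T ∈
      { n | ∃ M : SimpleGraph.Subgraph T, M.IsMatching ∧ n = M.edgeSet.ncard } :=
    Nat.sSup_mem ⟨0, hBne⟩ bddAbove_matchSet
  obtain ⟨M₀, hM₀, hM₀card⟩ := hmax_mem
  -- the set of coverage numbers of maximum matchings
  set A : Set ℕ := { k | ∃ M : SimpleGraph.Subgraph T, M.IsMatching ∧
    M.edgeSet.ncard = matchingNum T ∧ k = (S ∩ M.verts).ncard } with hAdef
  have hAne : (S ∩ M₀.verts).ncard ∈ A := ⟨M₀, hM₀, hM₀card.symm, rfl⟩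
  have hAbdd : BddAbove A := by
    refine ⟨Fintype.card V, ?_⟩
    rintro k ⟨M, -, -, rfl⟩
    calc (S ∩ M.verts).ncard ≤ (Set.univ : Set V).ncard :=
          Set.ncard_le_ncard (Set.subset_univ _) (Set.toFinite _)
      _ = Fintype.card V := by rw [Set.ncard_univ, Nat.card_eq_fintype_card]
  have hsup_mem : sSup A ∈ A := Nat.sSup_mem ⟨_, hAne⟩ hAbdd
  obtain ⟨M, hM, hMcard, hMk⟩ := hsup_mem
  refine ⟨M, hM, hMcard, ?_⟩
  intro v hv
  by_contra hvM
  obtain ⟨M', hM', hmax', hsub'⟩ :=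
    cascade hT hn v (Fintype.card V) M hM hMcard v hvM hv
      SimpleGraph.Walk.nil SimpleGraph.Walk.IsPath.nil (by simp)
  have hsubS : insert v (S ∩ M.verts) ⊆ S ∩ M'.verts := by
    intro a ha
    refine ⟨?_, hsub' ha⟩
    rcases ha with rfl | ⟨haS, -⟩
    · exact hv
    · exact haS
  have h1 : sSup A + 1 ≤ (S ∩ M'.verts).ncard := by
    have hvnot : v ∉ S ∩ M.verts := fun h => hvM h.2
    calc sSup A + 1 = (S ∩ M.verts).ncard + 1 := by rw [hMk]
      _ = (insert v (S ∩ M.verts)).ncard :=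
          (Set.ncard_insert_of_notMem hvnot (Set.toFinite _)).symm
      _ ≤ (S ∩ M'.verts).ncard := Set.ncard_le_ncard hsubS (Set.toFinite _)
  have h2 : (S ∩ M'.verts).ncard ≤ sSup A := le_csSup hAbdd ⟨M', hM', hmax', rfl⟩
  omega
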